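/- Let N ≥ 1, let r_1,...,r_N be reals with 0 ≤ r_1 ≤ r_2 ≤ ... ≤ r_N, and let y_1,...,y_N be arbitrary reals. Then the ultradiscrete permanent of the N×N matrix whose (j,m) entry (m = 1,...,N) is |y_j + (−N−1+2m)·r_j| equals [max over (ρ_1,...,ρ_N) ∈ {−1,1}^N of (Σ_{j=1}^N ρ_j·y_j − Σ_{1≤j<j'≤N} ρ_j·ρ_{j'}·r_j)] + Σ_{1≤j<j'≤N} r_{j'}. -/

import Mathlib

open Finset

/-- The ultradiscrete permanent of an `N × N` real matrix:
the maximum over all permutations `π` of `Σ_j a j (π j)`. -/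
noncomputable def uperm (N : ℕ) (a : Fin N → Fin N → ℝ) : ℝ :=
  Finset.univ.sup' Finset.univ_nonempty fun π : Equiv.Perm (Fin N) => ∑ j, a j (π j)



namespace UpermAux

variable {N : ℕ}

/-- Sum over ordered pairs `j < j'`. -/
noncomputable def psum (N : ℕ) (f : Fin N → Fin N → ℝ) : ℝ :=
  ∑ j, ∑ j', if j < j' then f j j' else 0

lemma sum_mul_c (u : Fin N → ℝ) :
    ∑ m, u m * (2 * ((m : ℕ) : ℝ) - (N : ℝ) + 1) =
      psum N (fun m m' => u m' - u m) := by
  have hA : ∀ m' : Fin N, (∑ m, if m < m' then u m' else (0:ℝ)) = ((m' : ℕ) : ℝ) * u m' := by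
    intro m'
    rw [Finset.sum_ite, Finset.sum_const_zero, add_zero, Finset.sum_const]
    have : (univ.filter fun m : Fin N => m < m') = Finset.Iio m' := by
      ext x; simp
    rw [this, Fin.card_Iio, nsmul_eq_mul]
  have hB : ∀ m : Fin N, (∑ m', if m < m' then u m else (0:ℝ))
      = ((N - 1 - (m : ℕ) : ℕ) : ℝ) * u m := by
    intro m
    rw [Finset.sum_ite, Finset.sum_const_zero, add_zero, Finset.sum_const]
    have : (univ.filter fun m' : Fin N => m < m') = Finset.Ioi m := by
      ext x; simp
    rw [this, Fin.card_Ioi, nsmul_eq_mul]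
  have hsplit : psum N (fun m m' => u m' - u m)
      = (∑ m, ∑ m', if m < m' then u m' else 0) - (∑ m, ∑ m', if m < m' then u m else 0) := by
    rw [← Finset.sum_sub_distrib]
    refine Finset.sum_congr rfl fun m _ => ?_
    rw [← Finset.sum_sub_distrib]
    refine Finset.sum_congr rfl fun m' _ => ?_
    split_ifs <;> ring
  rw [hsplit, Finset.sum_comm (f := fun m m' => if m < m' then u m' else (0:ℝ))]
  rw [Finset.sum_congr rfl (fun m' _ => hA m'), Finset.sum_congr rfl (fun m _ => hB m),
    ← Finset.sum_sub_distrib]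
  refine Finset.sum_congr rfl fun m _ => ?_
  have hm : (m : ℕ) + 1 ≤ N := m.isLt
  rw [Nat.sub_sub, Nat.cast_sub (by omega)]
  push_cast
  ring

lemma psum_half (f : Fin N → Fin N → ℝ) (hsymm : ∀ j j', f j j' = f j' j)
    (hdiag : ∀ j, f j j = 0) :
    psum N f = (∑ j, ∑ j', f j j') / 2 := by
  have key : ∑ j, ∑ j', f j j' = psum N f + psum N f := by
    unfold psum
    nth_rewrite 2 [Finset.sum_comm]
    rw [← Finset.sum_add_distrib]
    refine Finset.sum_congr rfl fun j _ => ?_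
    rw [← Finset.sum_add_distrib]
    refine Finset.sum_congr rfl fun j' _ => ?_
    rcases lt_trichotomy j j' with h | h | h
    · simp [h, not_lt_of_gt h]
    · simp [h, hdiag]
    · simp [h, not_lt_of_gt h, hsymm j j']
  rw [key]; ring

lemma psum_abs_perm (t : Fin N → ℝ) (σ : Equiv.Perm (Fin N)) :
    psum N (fun j j' => |t (σ j) - t (σ j')|) = psum N (fun j j' => |t j - t j'|) := by
  rw [psum_half _ (fun j j' => abs_sub_comm _ _) (fun j => by simp),
      psum_half _ (fun j j' => abs_sub_comm _ _) (fun j => by simp)]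
  congr 1
  rw [← Equiv.sum_comp σ (fun j => ∑ j', |t j - t j'|)]
  refine Finset.sum_congr rfl fun j _ => ?_
  rw [← Equiv.sum_comp σ (fun j' => |t (σ j) - t j'|)]

lemma key_le (t : Fin N → ℝ) (π : Equiv.Perm (Fin N)) :
    ∑ j, t j * (2 * ((π j : ℕ) : ℝ) - (N : ℝ) + 1)
      ≤ psum N (fun j j' => |t j - t j'|) := by
  have h1 : ∑ j, t j * (2 * ((π j : ℕ) : ℝ) - (N : ℝ) + 1)
      = ∑ m, t (π⁻¹ m) * (2 * ((m : ℕ) : ℝ) - (N : ℝ) + 1) := by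
    rw [← Equiv.sum_comp π (fun m => t (π⁻¹ m) * (2 * ((m : ℕ) : ℝ) - (N : ℝ) + 1))]
    simp
  rw [h1, sum_mul_c, ← psum_abs_perm t π⁻¹]
  unfold psum
  refine Finset.sum_le_sum fun j _ => Finset.sum_le_sum fun j' _ => ?_
  dsimp only
  split_ifs
  · rw [abs_sub_comm]; exact le_abs_self _
  · exact le_rfl

lemma key_eq (t : Fin N → ℝ) : ∃ π : Equiv.Perm (Fin N),
    ∑ j, t j * (2 * ((π j : ℕ) : ℝ) - (N : ℝ) + 1)
      = psum N (fun j j' => |t j - t j'|) := by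
  refine ⟨(Tuple.sort t)⁻¹, ?_⟩
  set σ := Tuple.sort t with hσ
  have hmono := Tuple.monotone_sort t
  have h1 : ∑ j, t j * (2 * ((σ⁻¹ j : ℕ) : ℝ) - (N : ℝ) + 1)
      = ∑ m, t (σ m) * (2 * ((m : ℕ) : ℝ) - (N : ℝ) + 1) := by
    rw [← Equiv.sum_comp σ (fun j => t j * (2 * ((σ⁻¹ j : ℕ) : ℝ) - (N : ℝ) + 1))]
    simp
  rw [h1, sum_mul_c, ← psum_abs_perm t σ]
  unfold psum
  refine Finset.sum_congr rfl fun m _ => Finset.sum_congr rfl fun m' _ => ?_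
  dsimp only
  rw [abs_sub_comm]
  split_ifs with h
  · exact (abs_of_nonneg (sub_nonneg.2 (hmono h.le))).symm
  · rfl

end UpermAux


open UpermAux in
theorem uperm_formula (N : ℕ) (hN : 1 ≤ N) (r y : Fin N → ℝ)
    (hr0 : ∀ j, 0 ≤ r j) (hrmono : Monotone r) :
    uperm N (fun j m => |y j + (2 * ((m : ℕ) : ℝ) - (N : ℝ) + 1) * r j|) =
      (Finset.univ.sup' Finset.univ_nonempty fun ρ : Fin N → Bool =>
        (∑ j, (if ρ j then (1 : ℝ) else -1) * y j) -
          ∑ j, ∑ j', if j < j' then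
            (if ρ j then (1 : ℝ) else -1) * (if ρ j' then (1 : ℝ) else -1) * r j else 0) +
      ∑ j : Fin N, ∑ j' : Fin N, (if j < j' then r j' else 0) := by
  classical
  set F : (Fin N → Bool) → ℝ := fun ρ =>
    (∑ j, (if ρ j then (1 : ℝ) else -1) * y j) -
      ∑ j, ∑ j', if j < j' then
        (if ρ j then (1 : ℝ) else -1) * (if ρ j' then (1 : ℝ) else -1) * r j else 0 with hF
  set C : ℝ := ∑ j : Fin N, ∑ j' : Fin N, (if j < j' then r j' else 0) with hC
  -- for each sign vector ρ, the pair-sum of |s j - s j'| equals C - (pair term of F)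
  have habs_pair : ∀ ρ : Fin N → Bool,
      psum N (fun j j' => |(if ρ j then (1:ℝ) else -1) * r j - (if ρ j' then (1:ℝ) else -1) * r j'|)
        = C - ∑ j, ∑ j', (if j < j' then
            (if ρ j then (1 : ℝ) else -1) * (if ρ j' then (1 : ℝ) else -1) * r j else 0) := by
    intro ρ
    rw [hC, ← Finset.sum_sub_distrib]
    unfold psum
    refine Finset.sum_congr rfl fun j _ => ?_
    rw [← Finset.sum_sub_distrib]
    refine Finset.sum_congr rfl fun j' _ => ?_
    dsimp only
    by_cases h : j < j'
    · have hle : r j ≤ r j' := hrmono h.le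
      have h0 := hr0 j
      have h0' := hr0 j'
      rw [if_pos h, if_pos h, if_pos h]
      cases hj : ρ j <;> cases hj' : ρ j' <;>
        simp only [Bool.false_eq_true, reduceIte]
      · rw [show (-1:ℝ) * r j - -1 * r j' = -(r j - r j') by ring, abs_neg,
          abs_sub_comm, abs_of_nonneg (sub_nonneg.2 hle)]
        ring
      · rw [show (-1:ℝ) * r j - 1 * r j' = -(r j + r j') by ring, abs_neg,
          abs_of_nonneg (by linarith)]
        ring
      · rw [show (1:ℝ) * r j - -1 * r j' = r j + r j' by ring,
          abs_of_nonneg (by linarith)]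
        ring
      · rw [show (1:ℝ) * r j - 1 * r j' = -(r j' - r j) by ring, abs_neg,
          abs_of_nonneg (sub_nonneg.2 hle)]
        ring
    · rw [if_neg h, if_neg h, if_neg h]
      ring
  apply le_antisymm
  · apply Finset.sup'_le
    intro π _
    set ρ : Fin N → Bool := fun j =>
      decide (0 ≤ y j + (2 * ((π j : ℕ) : ℝ) - (N : ℝ) + 1) * r j) with hρ
    have step1 : ∑ j, |y j + (2 * ((π j : ℕ) : ℝ) - (N : ℝ) + 1) * r j|
        = ∑ j, (if ρ j then (1:ℝ) else -1) * y j
          + ∑ j, ((if ρ j then (1:ℝ) else -1) * r j) * (2 * ((π j : ℕ) : ℝ) - (N : ℝ) + 1) := by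
      rw [← Finset.sum_add_distrib]
      refine Finset.sum_congr rfl fun j _ => ?_
      by_cases h : 0 ≤ y j + (2 * ((π j : ℕ) : ℝ) - (N : ℝ) + 1) * r j
      · rw [abs_of_nonneg h]
        simp only [hρ, decide_eq_true_eq]
        rw [if_pos h]; ring
      · rw [abs_of_neg (lt_of_not_ge h)]
        simp only [hρ, decide_eq_true_eq]
        rw [if_neg h]; ring
    have step2 := key_le (fun j => (if ρ j then (1:ℝ) else -1) * r j) π
    calc ∑ j, |y j + (2 * ((π j : ℕ) : ℝ) - (N : ℝ) + 1) * r j|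
        ≤ ∑ j, (if ρ j then (1:ℝ) else -1) * y j
          + psum N (fun j j' => |(if ρ j then (1:ℝ) else -1) * r j
              - (if ρ j' then (1:ℝ) else -1) * r j'|) := by
          rw [step1]; exact add_le_add_right step2 _
      _ = F ρ + C := by rw [habs_pair ρ, hF]; ring
      _ ≤ (Finset.univ.sup' Finset.univ_nonempty F) + C :=
          add_le_add_left (Finset.le_sup' F (mem_univ ρ)) C
  · have main : ∀ ρ : Fin N → Bool,
        F ρ + C ≤ uperm N (fun j m => |y j + (2 * ((m : ℕ) : ℝ) - (N : ℝ) + 1) * r j|) := by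
      intro ρ
      obtain ⟨π, hπ⟩ := key_eq (fun j => (if ρ j then (1:ℝ) else -1) * r j)
      have hbound : ∑ j, (if ρ j then (1:ℝ) else -1) * (y j + (2 * ((π j : ℕ) : ℝ) - (N : ℝ) + 1) * r j)
          ≤ ∑ j, |y j + (2 * ((π j : ℕ) : ℝ) - (N : ℝ) + 1) * r j| := by
        refine Finset.sum_le_sum fun j _ => ?_
        cases hj : ρ j <;> simp only [Bool.false_eq_true, reduceIte]
        · rw [neg_one_mul]
          exact neg_le_abs _
        · rw [one_mul]; exact le_abs_self _
      have heq : ∑ j, (if ρ j then (1:ℝ) else -1) * (y j + (2 * ((π j : ℕ) : ℝ) - (N : ℝ) + 1) * r j)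
          = F ρ + C := by
        have expand : ∑ j, (if ρ j then (1:ℝ) else -1) * (y j + (2 * ((π j : ℕ) : ℝ) - (N : ℝ) + 1) * r j)
            = ∑ j, (if ρ j then (1:ℝ) else -1) * y j
              + ∑ j, ((if ρ j then (1:ℝ) else -1) * r j) * (2 * ((π j : ℕ) : ℝ) - (N : ℝ) + 1) := by
          rw [← Finset.sum_add_distrib]
          exact Finset.sum_congr rfl fun j _ => by ring
        rw [expand, hπ, habs_pair ρ, hF]; ring
      refine le_trans (le_of_eq heq.symm) (le_trans hbound ?_)
      exact Finset.le_sup' (fun π : Equiv.Perm (Fin N) =>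
        ∑ j, |y j + (2 * ((π j : ℕ) : ℝ) - (N : ℝ) + 1) * r j|) (mem_univ π)
    calc (Finset.univ.sup' Finset.univ_nonempty F) + C
        ≤ (uperm N (fun j m => |y j + (2 * ((m : ℕ) : ℝ) - (N : ℝ) + 1) * r j|) - C) + C := by
          refine add_le_add_left (Finset.sup'_le _ _ fun ρ _ => ?_) C
          rw [le_sub_iff_add_le]; exact main ρ
      _ = _ := by ring
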